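/- Let X ∈ ℝ^{m×n₁}, Y ∈ ℝ^{m×n₂}, U ∈ ℝ^{m×r} with UᵀU = I_r, W ∈ ℝ^{m×r′} with WᵀW = I_{r′} and WᵀU = 0, C ∈ ℝ^{r×n₁}, and τ > 0, d ≥ 1. Define P = UᵀY, E = Y − U P, K = WᵀE, X̃ = [X, Y], Ũ = [U, W], C̃ = [[C, P], [0, K]]. If ‖X − U C‖_F ≤ (τ/√d)‖X‖_F and ‖E − W K‖_F ≤ (τ/√d)‖Y‖_F, then ‖X̃ − Ũ C̃‖_F ≤ (τ/√d)‖X̃‖_F. -/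

import Mathlib

open Matrix BigOperators

/-- Squared Frobenius norm of a real matrix. -/
noncomputable def frobSq {m n : Type*} [Fintype m] [Fintype n] (M : Matrix m n ℝ) : ℝ :=
  ∑ i, ∑ j, (M i j) ^ 2

/-- Frobenius norm of a real matrix. -/
noncomputable def frob {m n : Type*} [Fintype m] [Fintype n] (M : Matrix m n ℝ) : ℝ :=
  Real.sqrt (frobSq M)

lemma frobSq_nonneg {m n : Type*} [Fintype m] [Fintype n] (M : Matrix m n ℝ) :
    0 ≤ frobSq M :=
  Finset.sum_nonneg fun _ _ => Finset.sum_nonneg fun _ _ => sq_nonneg _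

lemma frob_nonneg {m n : Type*} [Fintype m] [Fintype n] (M : Matrix m n ℝ) :
    0 ≤ frob M := Real.sqrt_nonneg _

lemma sq_frob {m n : Type*} [Fintype m] [Fintype n] (M : Matrix m n ℝ) :
    frob M ^ 2 = frobSq M := Real.sq_sqrt (frobSq_nonneg M)

lemma frobSq_fromColumns {m n1 n2 : Type*} [Fintype m] [Fintype n1] [Fintype n2]
    (A : Matrix m n1 ℝ) (B : Matrix m n2 ℝ) :
    frobSq (Matrix.fromCols A B) = frobSq A + frobSq B := by
  simp only [frobSq, Fintype.sum_sum_type, fromCols]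
  rw [← Finset.sum_add_distrib]
  simp

lemma sub_fromColumns {m n1 n2 : Type*} (A A' : Matrix m n1 ℝ) (B B' : Matrix m n2 ℝ) :
    Matrix.fromCols A B - Matrix.fromCols A' B'
      = Matrix.fromCols (A - A') (B - B') := by
  ext i (j | j) <;> simp [fromCols]

/-- Induction step for non-streaming modes in the streaming ST-HOSVD
algorithm (Section 4.2 of the paper): the sequential per-mode error bound
`(τ/√d)‖·‖_F` is maintained after expanding the factor matrix by `W`. -/
theorem nonstreaming_mode_error_bound_maintained
    {m n1 n2 r r' : ℕ}
    (X : Matrix (Fin m) (Fin n1) ℝ)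
    (Y : Matrix (Fin m) (Fin n2) ℝ)
    (U : Matrix (Fin m) (Fin r) ℝ)
    (W : Matrix (Fin m) (Fin r') ℝ)
    (C : Matrix (Fin r) (Fin n1) ℝ)
    (τ : ℝ) (hτ : 0 < τ)
    (d : ℕ) (hd : 1 ≤ d)
    (hU : Uᵀ * U = 1)
    (hW : Wᵀ * W = 1)
    (hWU : Wᵀ * U = 0)
    (P : Matrix (Fin r) (Fin n2) ℝ) (hP : P = Uᵀ * Y)
    (E : Matrix (Fin m) (Fin n2) ℝ) (hE : E = Y - U * P)
    (K : Matrix (Fin r') (Fin n2) ℝ) (hK : K = Wᵀ * E)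
    (hX : frob (X - U * C) ≤ τ / Real.sqrt d * frob X)
    (hY : frob (E - W * K) ≤ τ / Real.sqrt d * frob Y) :
    frob (Matrix.fromCols X Y - Matrix.fromCols U W * Matrix.fromBlocks C P 0 K) ≤
      τ / Real.sqrt d * frob (Matrix.fromCols X Y) := by
  have hc : 0 ≤ τ / Real.sqrt d := div_nonneg hτ.le (Real.sqrt_nonneg _)
  have hprod : Matrix.fromCols U W * Matrix.fromBlocks C P 0 K
      = Matrix.fromCols (U * C) (U * P + W * K) := by
    rw [Matrix.fromCols_mul_fromBlocks]
    simp
  have hres : Matrix.fromCols X Y - Matrix.fromCols U W * Matrix.fromBlocks C P 0 K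
      = Matrix.fromCols (X - U * C) (E - W * K) := by
    rw [hprod, sub_fromColumns, hE]
    rw [sub_add_eq_sub_sub]
  rw [hres]
  -- reduce to squared inequality
  have key : frobSq (Matrix.fromCols (X - U * C) (E - W * K))
      ≤ (τ / Real.sqrt d * frob (Matrix.fromCols X Y)) ^ 2 := by
    rw [frobSq_fromColumns, mul_pow, sq_frob, frobSq_fromColumns]
    have h1 : frobSq (X - U * C) ≤ (τ / Real.sqrt d) ^ 2 * frobSq X := by
      rw [← sq_frob, ← sq_frob, ← mul_pow]
      exact pow_le_pow_left₀ (frob_nonneg _) hX 2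
    have h2 : frobSq (E - W * K) ≤ (τ / Real.sqrt d) ^ 2 * frobSq Y := by
      rw [← sq_frob, ← sq_frob, ← mul_pow]
      exact pow_le_pow_left₀ (frob_nonneg _) hY 2
    nlinarith
  calc frob (Matrix.fromCols (X - U * C) (E - W * K))
      = Real.sqrt (frobSq (Matrix.fromCols (X - U * C) (E - W * K))) := rfl
    _ ≤ Real.sqrt ((τ / Real.sqrt d * frob (Matrix.fromCols X Y)) ^ 2) :=
        Real.sqrt_le_sqrt key
    _ = τ / Real.sqrt d * frob (Matrix.fromCols X Y) := by
        rw [Real.sqrt_sq (mul_nonneg hc (frob_nonneg _))]
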